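/- (Vanishing property, part a) Assume the complex numbers a_j are pairwise distinct with a_1 = 0. Let μ, λ be strict partitions with μ ⊄ λ (the shifted diagram of μ is not contained in that of λ). Define x(λ)_i = a_{λ_i + 1} for 1 ≤ i ≤ ℓ(λ). Then P_{μ;a}(x(λ)) = 0, i.e., evaluating the multiparameter Schur P-function at the point (a_{λ_1+1},…,a_{λ_{ℓ(λ)}+1}, 0, 0, …) gives zero. -/

import Mathlib

noncomputable section

abbrev K (n : ℕ) : Type := FractionRing (MvPolynomial (Fin n) ℂ)

def Xv {n : ℕ} (i : Fin n) : K n :=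
  algebraMap (MvPolynomial (Fin n) ℂ) (K n) (MvPolynomial.X i)

def Cv {n : ℕ} (c : ℂ) : K n :=
  algebraMap (MvPolynomial (Fin n) ℂ) (K n) (MvPolynomial.C c)

/-- The product over pairs `i < j` with `i < l` of `(x i + x j)/(x i - x j)`. -/
def ratioProd {n : ℕ} (l : ℕ) (x : Fin n → K n) : K n :=
  ∏ p ∈ Finset.univ.filter (fun p : Fin n × Fin n => (p.1 : ℕ) < l ∧ p.1 < p.2),
    (x p.1 + x p.2) / (x p.1 - x p.2)

/-- A strict partition: strictly decreasing positive parts `parts 0 > parts 1 > ⋯`,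
indexed from `0`, with `parts i = 0` for `i ≥ l`. -/
structure SPartition where
  l : ℕ
  parts : ℕ → ℕ
  strict : ∀ i, i + 1 < l → parts (i + 1) < parts i
  pos : ∀ i, i < l → 0 < parts i
  zero : ∀ i, l ≤ i → parts i = 0

def SPartition.size (lam : SPartition) : ℕ := ∑ i ∈ Finset.range lam.l, lam.parts i

/-- The multiparameter Schur P-polynomial `P_{λ;a|n}`, as an element of the field of
rational functions in `n` variables (by convention `0` if `n < ℓ(λ)`). -/
def Pmulti (lam : SPartition) (a : ℕ → ℂ) (n : ℕ) : K n :=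
  if hl : lam.l ≤ n then
    Cv (((n - lam.l).factorial : ℂ))⁻¹ *
      ∑ ω : Equiv.Perm (Fin n),
        (∏ i : Fin lam.l,
            ∏ k ∈ Finset.range (lam.parts i.1),
              (Xv (ω (Fin.castLE hl i)) - Cv (a (k + 1)))) *
          ratioProd lam.l (fun j => Xv (ω j))
  else 0


/-- The evaluation point `x(λ) = (a_{λ_1+1}, …, a_{λ_{ℓ(λ)}+1}, 0, 0, …)` in `n`
variables. -/
def xpt (lam : SPartition) (a : ℕ → ℂ) (n : ℕ) : Fin n → ℂ :=
  fun i => if (i : ℕ) < lam.l then a (lam.parts (i : ℕ) + 1) else 0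

namespace SchurVanish

open MvPolynomial Finset

abbrev Rn (n : ℕ) := MvPolynomial (Fin n) ℂ

lemma emb_inj (n : ℕ) : Function.Injective (algebraMap (Rn n) (K n)) :=
  IsFractionRing.injective _ _

def Tset (l n : ℕ) : Finset (Fin n × Fin n) :=
  Finset.univ.filter (fun p : Fin n × Fin n => (p.1 : ℕ) < l ∧ p.1 < p.2)

lemma ratioProd_eq {n : ℕ} (l : ℕ) (x : Fin n → K n) :
    ratioProd l x = ∏ q ∈ Tset l n, (x q.1 + x q.2) / (x q.1 - x q.2) := rfl

def offd (n : ℕ) : Finset (Fin n × Fin n) := Finset.univ.filter (fun q => q.1 ≠ q.2)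

def Dpoly (n : ℕ) : Rn n := ∏ q ∈ offd n, (X q.1 - X q.2)

def Epoly {n : ℕ} (l : ℕ) (ω : Equiv.Perm (Fin n)) : Rn n :=
  ∏ q ∈ offd n \ (Tset l n).image (fun q => (ω q.1, ω q.2)), (X q.1 - X q.2)

def Bpoly {n : ℕ} (l : ℕ) (ω : Equiv.Perm (Fin n)) : Rn n :=
  ∏ q ∈ Tset l n, (X (ω q.1) + X (ω q.2))

def Apoly {n : ℕ} (mu : SPartition) (a : ℕ → ℂ) (hm : mu.l ≤ n) (ω : Equiv.Perm (Fin n)) :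
    Rn n :=
  ∏ i : Fin mu.l, ∏ k ∈ Finset.range (mu.parts i.1),
    (X (ω (Fin.castLE hm i)) - C (a (k + 1)))

lemma D_decomp {n : ℕ} {F : Type} [Field F] (ψ : Rn n →+* F) (l : ℕ)
    (ω : Equiv.Perm (Fin n)) :
    ψ (Dpoly n) =
      (∏ q ∈ Tset l n, (ψ (X (ω q.1)) - ψ (X (ω q.2)))) * ψ (Epoly l ω) := by
  have hinj2 : ∀ x ∈ Tset l n, ∀ y ∈ Tset l n,
      (fun q : Fin n × Fin n => (ω q.1, ω q.2)) x =
      (fun q : Fin n × Fin n => (ω q.1, ω q.2)) y → x = y := by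
    intro x _ y _ hxy
    simp only [Prod.mk.injEq] at hxy
    exact Prod.ext (ω.injective hxy.1) (ω.injective hxy.2)
  have hsub : (Tset l n).image (fun q => (ω q.1, ω q.2)) ⊆ offd n := by
    intro q hq
    simp only [Tset, Finset.mem_image, Finset.mem_filter, Finset.mem_univ, true_and] at hq
    obtain ⟨q', ⟨_, hlt⟩, rfl⟩ := hq
    simp only [offd, Finset.mem_filter, Finset.mem_univ, true_and]
    exact fun h => absurd (ω.injective h) (ne_of_lt hlt)
  have h1 : ψ (Dpoly n) =
      (∏ q ∈ offd n \ (Tset l n).image (fun q => (ω q.1, ω q.2)), ψ (X q.1 - X q.2)) *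
        ∏ q ∈ (Tset l n).image (fun q => (ω q.1, ω q.2)), ψ (X q.1 - X q.2) := by
    rw [Dpoly, map_prod, ← Finset.prod_sdiff hsub]
  rw [h1, Finset.prod_image hinj2, Epoly, map_prod, mul_comm]
  simp only [map_sub]

lemma den_ne {n : ℕ} {F : Type} [Field F] (ψ : Rn n →+* F)
    (hx : ∀ i j : Fin n, i ≠ j → ψ (X i) ≠ ψ (X j)) {l : ℕ} {ω : Equiv.Perm (Fin n)} :
    ∀ q ∈ Tset l n, ψ (X (ω q.1)) - ψ (X (ω q.2)) ≠ 0 := by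
  intro q hq
  simp only [Tset, Finset.mem_filter, Finset.mem_univ, true_and] at hq
  exact sub_ne_zero_of_ne (hx _ _ (ω.injective.ne (ne_of_lt hq.2)))

lemma D_ne {n : ℕ} {F : Type} [Field F] (ψ : Rn n →+* F)
    (hx : ∀ i j : Fin n, i ≠ j → ψ (X i) ≠ ψ (X j)) : ψ (Dpoly n) ≠ 0 := by
  rw [Dpoly, map_prod, Finset.prod_ne_zero_iff]
  intro q hq
  simp only [offd, Finset.mem_filter, Finset.mem_univ, true_and] at hq
  rw [map_sub]
  exact sub_ne_zero_of_ne (hx _ _ hq)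

lemma ratio_mul_D {n : ℕ} {F : Type} [Field F] (ψ : Rn n →+* F)
    (hx : ∀ i j : Fin n, i ≠ j → ψ (X i) ≠ ψ (X j)) (l : ℕ) (ω : Equiv.Perm (Fin n)) :
    (∏ q ∈ Tset l n,
        (ψ (X (ω q.1)) + ψ (X (ω q.2))) / (ψ (X (ω q.1)) - ψ (X (ω q.2)))) * ψ (Dpoly n)
      = ψ (Bpoly l ω) * ψ (Epoly l ω) := by
  rw [D_decomp ψ l ω, ← mul_assoc, ← Finset.prod_mul_distrib]
  congr 1
  rw [Bpoly, map_prod]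
  refine Finset.prod_congr rfl fun q hq => ?_
  rw [div_mul_cancel₀ _ (den_ne ψ hx q hq), map_add]

lemma psiA {n : ℕ} {F : Type} [Field F] (ψ : Rn n →+* F) (mu : SPartition) (a : ℕ → ℂ)
    (hm : mu.l ≤ n) (ω : Equiv.Perm (Fin n)) :
    ψ (Apoly mu a hm ω) =
      ∏ i : Fin mu.l, ∏ k ∈ Finset.range (mu.parts i.1),
        (ψ (X (ω (Fin.castLE hm i))) - ψ (C (a (k + 1)))) := by
  rw [Apoly, map_prod]
  refine Finset.prod_congr rfl fun i _ => ?_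
  rw [map_prod]
  exact Finset.prod_congr rfl fun k _ => map_sub ψ _ _

lemma clearing {n : ℕ} (mu : SPartition) (a : ℕ → ℂ) (hm : mu.l ≤ n) :
    Pmulti mu a n * algebraMap (Rn n) (K n) (Dpoly n) =
      algebraMap (Rn n) (K n)
        (C ((((n - mu.l).factorial : ℂ))⁻¹) *
          ∑ ω : Equiv.Perm (Fin n), Apoly mu a hm ω * (Bpoly mu.l ω * Epoly mu.l ω)) := by
  have hxe : ∀ i j : Fin n, i ≠ j →
      (algebraMap (Rn n) (K n)) (X i) ≠ algebraMap (Rn n) (K n) (X j) :=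
    fun i j hij h => hij (X_injective (emb_inj n h))
  rw [Pmulti, dif_pos hm, map_mul, map_sum, mul_assoc]
  congr 1
  rw [Finset.sum_mul]
  refine Finset.sum_congr rfl fun ω _ => ?_
  rw [map_mul, map_mul, mul_assoc]
  congr 1
  · exact (psiA (algebraMap (Rn n) (K n)) mu a hm ω).symm
  · exact ratio_mul_D (algebraMap (Rn n) (K n)) hxe mu.l ω

lemma transport {n : ℕ} {F : Type} [Field F] (ψ : Rn n →+* F)
    (hx : ∀ i j : Fin n, i ≠ j → ψ (X i) ≠ ψ (X j))
    (mu : SPartition) (a : ℕ → ℂ) (hm : mu.l ≤ n) (p : Rn n)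
    (hp : algebraMap (Rn n) (K n) p = Pmulti mu a n) :
    ψ p = ψ (C ((((n - mu.l).factorial : ℂ))⁻¹)) *
      ∑ ω : Equiv.Perm (Fin n),
        (∏ i : Fin mu.l, ∏ k ∈ Finset.range (mu.parts i.1),
            (ψ (X (ω (Fin.castLE hm i))) - ψ (C (a (k + 1))))) *
          ∏ q ∈ Tset mu.l n,
            (ψ (X (ω q.1)) + ψ (X (ω q.2))) / (ψ (X (ω q.1)) - ψ (X (ω q.2))) := by
  have key : p * Dpoly n =
      C ((((n - mu.l).factorial : ℂ))⁻¹) *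
        ∑ ω : Equiv.Perm (Fin n), Apoly mu a hm ω * (Bpoly mu.l ω * Epoly mu.l ω) := by
    apply emb_inj n
    rw [map_mul (algebraMap (Rn n) (K n)) p (Dpoly n), hp]
    exact clearing mu a hm
  have h2 := congrArg ψ key
  simp only [map_mul, map_sum] at h2
  have h3 : ∀ ω : Equiv.Perm (Fin n),
      ψ (Apoly mu a hm ω) * (ψ (Bpoly mu.l ω) * ψ (Epoly mu.l ω)) =
      ((∏ i : Fin mu.l, ∏ k ∈ Finset.range (mu.parts i.1),
            (ψ (X (ω (Fin.castLE hm i))) - ψ (C (a (k + 1))))) *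
          ∏ q ∈ Tset mu.l n,
            (ψ (X (ω q.1)) + ψ (X (ω q.2))) / (ψ (X (ω q.1)) - ψ (X (ω q.2)))) *
        ψ (Dpoly n) := by
    intro ω
    rw [← ratio_mul_D ψ hx mu.l ω, psiA ψ mu a hm ω]
    ring
  simp only [h3] at h2
  rw [← Finset.sum_mul, ← mul_assoc] at h2
  exact mul_right_cancel₀ (D_ne ψ hx) h2

end SchurVanish

namespace SchurVanish

open MvPolynomial Finset

lemma parts_anti (P : SPartition) : ∀ {i j : ℕ}, i ≤ j → P.parts j ≤ P.parts i := by
  have step : ∀ j, P.parts (j + 1) ≤ P.parts j := by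
    intro j
    by_cases h : j + 1 < P.l
    · exact le_of_lt (P.strict j h)
    · rw [P.zero (j + 1) (not_lt.1 h)]; exact Nat.zero_le _
  intro i j hij
  induction j with
  | zero => rw [Nat.le_zero.mp hij]
  | succ j ih =>
    rcases eq_or_lt_of_le hij with h | h
    · rw [h]
    · exact le_trans (step j) (ih (Nat.lt_succ_iff.mp h))
  
lemma parts_lt (P : SPartition) {i j : ℕ} (hij : i < j) (hj : j < P.l) :
    P.parts j < P.parts i :=
  lt_of_le_of_lt (parts_anti P (Nat.succ_le_of_lt hij))
    (P.strict i (lt_of_le_of_lt (Nat.succ_le_of_lt hij) hj))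

lemma parts_injOn (P : SPartition) {i j : ℕ} (hi : i < P.l) (hj : j < P.l)
    (h : P.parts i = P.parts j) : i = j := by
  rcases lt_trichotomy i j with hlt | he | hgt
  · exact absurd h (ne_of_gt (parts_lt P hlt hj))
  · exact he
  · exact absurd h (ne_of_lt (parts_lt P hgt hi))

lemma lt_l_of_pos (P : SPartition) {i : ℕ} (h : 0 < P.parts i) : i < P.l := by
  by_contra hc
  rw [P.zero i (not_lt.1 hc)] at h
  exact lt_irrefl 0 h

lemma pigeon (mu lam : SPartition) {i₀ n : ℕ} (h0 : lam.parts i₀ < mu.parts i₀)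
    (hm : mu.l ≤ n) (ω : Equiv.Perm (Fin n))
    (h : ∀ i : Fin mu.l, mu.parts i.1 ≤ lam.parts ((ω (Fin.castLE hm i)) : ℕ)) : False := by
  have hi₀l : i₀ < mu.l := lt_l_of_pos mu (Nat.lt_of_le_of_lt (Nat.zero_le _) h0)
  set I : Fin n := ⟨i₀, lt_of_lt_of_le hi₀l hm⟩ with hI
  have maps : ∀ x ∈ Finset.Iic I, ω x ∈ Finset.Iio I := by
    intro x hx
    rw [Finset.mem_Iic] at hx
    have hxi : (x : ℕ) ≤ i₀ := hx
    have hxl : (x : ℕ) < mu.l := lt_of_le_of_lt hxi hi₀l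
    have hcast : Fin.castLE hm (⟨(x : ℕ), hxl⟩ : Fin mu.l) = x := Fin.ext rfl
    have h1 := h ⟨(x : ℕ), hxl⟩
    rw [hcast] at h1
    have h2 : lam.parts i₀ < lam.parts ((ω x : Fin n) : ℕ) :=
      lt_of_lt_of_le (lt_of_lt_of_le h0 (parts_anti mu hxi)) h1
    rw [Finset.mem_Iio]
    by_contra hc
    have : i₀ ≤ ((ω x : Fin n) : ℕ) := not_lt.1 hc
    exact absurd h2 (not_lt.2 (parts_anti lam this))
  have hcard := Finset.card_le_card_of_injOn (fun x => ω x) maps (ω.injective.injOn)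
  rw [Fin.card_Iic, Fin.card_Iio] at hcard
  omega

lemma base_case (a : ℕ → ℂ)
    (hinj : ∀ i j : ℕ, 0 < i → 0 < j → a i = a j → i = j)
    (mu lam : SPartition) (hns : ∃ i, lam.parts i < mu.parts i)
    (n : ℕ) (hfull : n ≤ lam.l) (p : Rn n)
    (hp : algebraMap (Rn n) (K n) p = Pmulti mu a n) :
    MvPolynomial.eval (xpt lam a n) p = 0 := by
  by_cases hm : mu.l ≤ n
  · obtain ⟨i₀, hi₀⟩ := hns
    have hxval : ∀ v : Fin n, xpt lam a n v = a (lam.parts (v : ℕ) + 1) := by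
      intro v
      rw [xpt, if_pos (lt_of_lt_of_le v.2 hfull)]
    have hx : ∀ i j : Fin n, i ≠ j →
        (MvPolynomial.eval (xpt lam a n)) (X i) ≠ (MvPolynomial.eval (xpt lam a n)) (X j) := by
      intro i j hij
      rw [eval_X, eval_X, hxval, hxval]
      intro h
      have h1 := hinj _ _ (Nat.succ_pos _) (Nat.succ_pos _) h
      have h2 : lam.parts (i : ℕ) = lam.parts (j : ℕ) := by omega
      exact hij (Fin.ext (parts_injOn lam (lt_of_lt_of_le i.2 hfull)
        (lt_of_lt_of_le j.2 hfull) h2))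
    rw [transport (MvPolynomial.eval (xpt lam a n)) hx mu a hm p hp]
    apply mul_eq_zero_of_right
    apply Finset.sum_eq_zero
    intro ω _
    apply mul_eq_zero_of_left
    have hex : ∃ i : Fin mu.l, lam.parts ((ω (Fin.castLE hm i)) : ℕ) < mu.parts i.1 := by
      by_contra hc
      push_neg at hc
      exact pigeon mu lam hi₀ hm ω hc
    obtain ⟨i, hi⟩ := hex
    apply Finset.prod_eq_zero (Finset.mem_univ i)
    apply Finset.prod_eq_zero (Finset.mem_range.mpr hi)
    rw [eval_X, eval_C, hxval]
    exact sub_self _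
  · have h0 : Pmulti mu a n = 0 := by rw [Pmulti, dif_neg hm]
    have hp0 : p = 0 := emb_inj n (by rw [hp, h0, map_zero])
    rw [hp0, map_zero]

end SchurVanish

namespace SchurVanish

open MvPolynomial Finset

def Phi {n : ℕ} (j : Fin (n + 1)) (σ : Equiv.Perm (Fin n)) : Equiv.Perm (Fin (n + 1)) :=
  ((finSuccEquiv' j).trans (Equiv.optionCongr σ)).trans (finSuccEquiv' (Fin.last n)).symm

lemma Phi_at {n : ℕ} (j : Fin (n + 1)) (σ : Equiv.Perm (Fin n)) : Phi j σ j = Fin.last n := by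
  simp [Phi, finSuccEquiv'_at, finSuccEquiv'_symm_none]

lemma Phi_succAbove {n : ℕ} (j : Fin (n + 1)) (σ : Equiv.Perm (Fin n)) (t : Fin n) :
    Phi j σ (j.succAbove t) = Fin.castSucc (σ t) := by
  simp [Phi, finSuccEquiv'_succAbove, finSuccEquiv'_symm_some, Fin.succAbove_last]

lemma Phi_lt {n : ℕ} (j : Fin (n + 1)) (σ : Equiv.Perm (Fin n)) (y : Fin (n + 1))
    (h : (y : ℕ) < (j : ℕ)) :
    Phi j σ y = Fin.castSucc (σ ⟨(y : ℕ), lt_of_lt_of_le h (Nat.lt_succ_iff.mp j.2)⟩) := by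
  have hy : j.succAbove ⟨(y : ℕ), lt_of_lt_of_le h (Nat.lt_succ_iff.mp j.2)⟩ = y := by
    rw [Fin.succAbove_of_castSucc_lt]
    · exact Fin.ext rfl
    · rw [Fin.lt_def]
      exact h
  conv_lhs => rw [← hy]
  exact Phi_succAbove j σ _

lemma Phi_bij {n : ℕ} :
    Function.Bijective (fun js : Fin (n + 1) × Equiv.Perm (Fin n) => Phi js.1 js.2) := by
  rw [Fintype.bijective_iff_injective_and_card]
  constructor
  · rintro ⟨j, σ⟩ ⟨j', σ'⟩ h
    simp only at h
    have hj : j = j' := by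
      by_contra hne
      obtain ⟨t, ht⟩ := Fin.exists_succAbove_eq (fun hh => hne hh.symm : j' ≠ j)
      have h1 : Phi j σ j' = Fin.castSucc (σ t) := by rw [← ht, Phi_succAbove]
      rw [h, Phi_at] at h1
      exact (Fin.castSucc_lt_last (σ t)).ne' h1
    subst hj
    have hσ : σ = σ' := by
      apply Equiv.ext
      intro t
      have h1 : Phi j σ (j.succAbove t) = Fin.castSucc (σ t) := Phi_succAbove j σ t
      rw [h, Phi_succAbove] at h1
      exact Fin.castSucc_injective n h1.symm
    rw [hσ]
  · simp only [Fintype.card_prod, Fintype.card_perm, Fintype.card_fin]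
    rw [Nat.factorial_succ]

lemma sum_perm_reindex {n : ℕ} {M : Type} [AddCommMonoid M]
    (F : Equiv.Perm (Fin (n + 1)) → M) :
    ∑ ω : Equiv.Perm (Fin (n + 1)), F ω =
      ∑ j : Fin (n + 1), ∑ σ : Equiv.Perm (Fin n), F (Phi j σ) := by
  calc ∑ ω : Equiv.Perm (Fin (n + 1)), F ω
      = ∑ js : Fin (n + 1) × Equiv.Perm (Fin n), F (Phi js.1 js.2) :=
        (Fintype.sum_bijective _ Phi_bij _ F (fun x => rfl)).symm
    _ = ∑ j : Fin (n + 1), ∑ σ : Equiv.Perm (Fin n), F (Phi j σ) :=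
        Fintype.sum_prod_type (fun js : Fin (n + 1) × Equiv.Perm (Fin n) => F (Phi js.1 js.2))

def phi (n : ℕ) : Rn (n + 1) →+* Rn n :=
  eval₂Hom C (fun i => Fin.lastCases 0 (fun j : Fin n => X j) i)

lemma phi_C {n : ℕ} (z : ℂ) : phi n (C z) = C z := by simp [phi]

lemma phi_X_last {n : ℕ} : phi n (X (Fin.last n)) = 0 := by simp [phi]

lemma phi_X_cast {n : ℕ} (j : Fin n) : phi n (X (Fin.castSucc j)) = X j := by simp [phi]

lemma eval_phi {n : ℕ} (y : Fin n → ℂ) (p : Rn (n + 1)) :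
    MvPolynomial.eval y (phi n p) =
      MvPolynomial.eval
        (fun i : Fin (n + 1) => Fin.lastCases (motive := fun _ => ℂ) 0 (fun j => y j) i) p := by
  have h : (MvPolynomial.eval y).comp (phi n) =
      MvPolynomial.eval
        (fun i : Fin (n + 1) => Fin.lastCases (motive := fun _ => ℂ) 0 (fun j => y j) i) := by
    apply MvPolynomial.ringHom_ext
    · intro r
      simp [phi_C]
    · intro i
      induction i using Fin.lastCases with
      | last => simp [phi_X_last]
      | cast j => simp [phi_X_cast]
  exact RingHom.congr_fun h p

lemma xpt_ext {n : ℕ} (lam : SPartition) (a : ℕ → ℂ) (hln : lam.l ≤ n) :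
    (fun i : Fin (n + 1) =>
        Fin.lastCases (motive := fun _ => ℂ) 0 (fun j => xpt lam a n j) i) =
      xpt lam a (n + 1) := by
  funext i
  induction i using Fin.lastCases with
  | last =>
    rw [Fin.lastCases_last, xpt, if_neg]
    simp only [Fin.val_last]
    omega
  | cast j =>
    rw [Fin.lastCases_castSucc]
    simp [xpt, Fin.coe_castSucc]

end SchurVanish

namespace SchurVanish

open MvPolynomial Finset

lemma Cv_natCast {n : ℕ} (m : ℕ) : (Cv ((m : ℂ)) : K n) = (m : K n) := by
  show algebraMap (Rn n) (K n) (C ((m : ℕ) : ℂ)) = (m : K n)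
  rw [map_natCast (C : ℂ →+* Rn n) m, map_natCast]

lemma Cv_mul {n : ℕ} (x y : ℂ) : (Cv x : K n) * Cv y = Cv (x * y) := by
  show algebraMap (Rn n) (K n) (C x) * algebraMap (Rn n) (K n) (C y) =
    algebraMap (Rn n) (K n) (C (x * y))
  rw [map_mul, map_mul]

lemma Xv_ne (n : ℕ) (j : Fin n) : (Xv j : K n) ≠ 0 := by
  intro h
  have h2 : (algebraMap (Rn n) (K n)) (X j) = algebraMap (Rn n) (K n) 0 := by
    rw [map_zero]; exact h
  exact X_ne_zero j (emb_inj n h2)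

lemma term_zero {n : ℕ} (mu : SPartition) (a : ℕ → ℂ) (ha : a 1 = 0)
    (hm : mu.l ≤ n + 1) (Ψ : Rn (n + 1) →+* K n)
    (hlast : Ψ (X (Fin.last n)) = 0)
    (hC : ∀ z : ℂ, Ψ (C z) = Cv z)
    (j : Fin (n + 1)) (σ : Equiv.Perm (Fin n)) (hj : (j : ℕ) < mu.l) :
    (∏ i : Fin mu.l, ∏ k ∈ Finset.range (mu.parts i.1),
        (Ψ (X ((Phi j σ) (Fin.castLE hm i))) - Ψ (C (a (k + 1))))) *
      ∏ q ∈ Tset mu.l (n + 1),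
        (Ψ (X ((Phi j σ) q.1)) + Ψ (X ((Phi j σ) q.2))) /
          (Ψ (X ((Phi j σ) q.1)) - Ψ (X ((Phi j σ) q.2))) = 0 := by
  apply mul_eq_zero_of_left
  apply Finset.prod_eq_zero (Finset.mem_univ (⟨(j : ℕ), hj⟩ : Fin mu.l))
  apply Finset.prod_eq_zero (Finset.mem_range.mpr (mu.pos _ hj))
  have hc : Fin.castLE hm (⟨(j : ℕ), hj⟩ : Fin mu.l) = j := Fin.ext rfl
  rw [hc, Phi_at, hlast, hC]
  have hz : a (0 + 1) = 0 := ha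
  rw [hz]
  have hCv0 : (Cv 0 : K n) = 0 := by
    show algebraMap (Rn n) (K n) (C 0) = 0
    rw [map_zero, map_zero]
  rw [hCv0, sub_zero]

lemma sum_eval_zero {n : ℕ} (mu : SPartition) (a : ℕ → ℂ) (ha : a 1 = 0)
    (hm : mu.l ≤ n + 1) (hml : n + 1 ≤ mu.l) (Ψ : Rn (n + 1) →+* K n)
    (hlast : Ψ (X (Fin.last n)) = 0)
    (hC : ∀ z : ℂ, Ψ (C z) = Cv z) :
    ∑ ω : Equiv.Perm (Fin (n + 1)),
      (∏ i : Fin mu.l, ∏ k ∈ Finset.range (mu.parts i.1),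
          (Ψ (X (ω (Fin.castLE hm i))) - Ψ (C (a (k + 1))))) *
        ∏ q ∈ Tset mu.l (n + 1),
          (Ψ (X (ω q.1)) + Ψ (X (ω q.2))) / (Ψ (X (ω q.1)) - Ψ (X (ω q.2))) = 0 := by
  rw [sum_perm_reindex]
  apply Finset.sum_eq_zero
  intro j _
  apply Finset.sum_eq_zero
  intro σ _
  exact term_zero mu a ha hm Ψ hlast hC j σ (lt_of_lt_of_le j.2 hml)

lemma sum_eval {n : ℕ} (mu : SPartition) (a : ℕ → ℂ) (ha : a 1 = 0)
    (hm : mu.l ≤ n + 1) (hmn : mu.l ≤ n) (Ψ : Rn (n + 1) →+* K n)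
    (hlast : Ψ (X (Fin.last n)) = 0)
    (hcast : ∀ j : Fin n, Ψ (X (Fin.castSucc j)) = Xv j)
    (hC : ∀ z : ℂ, Ψ (C z) = Cv z) :
    ∑ ω : Equiv.Perm (Fin (n + 1)),
      (∏ i : Fin mu.l, ∏ k ∈ Finset.range (mu.parts i.1),
          (Ψ (X (ω (Fin.castLE hm i))) - Ψ (C (a (k + 1))))) *
        ∏ q ∈ Tset mu.l (n + 1),
          (Ψ (X (ω q.1)) + Ψ (X (ω q.2))) / (Ψ (X (ω q.1)) - Ψ (X (ω q.2)))
    = (n + 1 - mu.l) •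
        ∑ σ : Equiv.Perm (Fin n),
          (∏ i : Fin mu.l, ∏ k ∈ Finset.range (mu.parts i.1),
              (Xv (σ (Fin.castLE hmn i)) - Cv (a (k + 1)))) *
            ratioProd mu.l (fun t => Xv (σ t)) := by
  rw [sum_perm_reindex]
  have key : ∀ j : Fin (n + 1),
      (∑ σ : Equiv.Perm (Fin n),
        (∏ i : Fin mu.l, ∏ k ∈ Finset.range (mu.parts i.1),
            (Ψ (X ((Phi j σ) (Fin.castLE hm i))) - Ψ (C (a (k + 1))))) *
          ∏ q ∈ Tset mu.l (n + 1),
            (Ψ (X ((Phi j σ) q.1)) + Ψ (X ((Phi j σ) q.2))) /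
              (Ψ (X ((Phi j σ) q.1)) - Ψ (X ((Phi j σ) q.2)))) =
      if (j : ℕ) < mu.l then 0 else
        ∑ σ : Equiv.Perm (Fin n),
          (∏ i : Fin mu.l, ∏ k ∈ Finset.range (mu.parts i.1),
              (Xv (σ (Fin.castLE hmn i)) - Cv (a (k + 1)))) *
            ratioProd mu.l (fun t => Xv (σ t)) := by
    intro j
    by_cases hj : (j : ℕ) < mu.l
    · rw [if_pos hj]
      exact Finset.sum_eq_zero fun σ _ => term_zero mu a ha hm Ψ hlast hC j σ hj
    · rw [if_neg hj]
      have hj' : mu.l ≤ (j : ℕ) := not_lt.1 hj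
      apply Finset.sum_congr rfl
      intro σ _
      congr 1
      · apply Finset.prod_congr rfl
        intro i _
        apply Finset.prod_congr rfl
        intro k _
        have hlt : ((Fin.castLE hm i : Fin (n + 1)) : ℕ) < (j : ℕ) := lt_of_lt_of_le i.2 hj'
        rw [Phi_lt j σ _ hlt, hcast, hC]
        have harg : (⟨((Fin.castLE hm i : Fin (n + 1)) : ℕ),
            lt_of_lt_of_le hlt (Nat.lt_succ_iff.mp j.2)⟩ : Fin n) = Fin.castLE hmn i :=
          Fin.ext rfl
        rw [harg]
      · rw [ratioProd_eq]
        rw [← Finset.prod_filter_mul_prod_filter_not (Tset mu.l (n + 1)) (fun q => q.2 = j)]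
        have h1 : ∏ q ∈ (Tset mu.l (n + 1)).filter (fun q => q.2 = j),
            (Ψ (X ((Phi j σ) q.1)) + Ψ (X ((Phi j σ) q.2))) /
              (Ψ (X ((Phi j σ) q.1)) - Ψ (X ((Phi j σ) q.2))) = 1 := by
          apply Finset.prod_eq_one
          intro q hq
          rw [Finset.mem_filter] at hq
          obtain ⟨hqT, hq2⟩ := hq
          simp only [Tset, Finset.mem_filter, Finset.mem_univ, true_and] at hqT
          obtain ⟨hq1, -⟩ := hqT
          have hlt : ((q.1 : Fin (n + 1)) : ℕ) < (j : ℕ) := lt_of_lt_of_le hq1 hj'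
          rw [hq2, Phi_lt j σ _ hlt, Phi_at, hcast, hlast, add_zero, sub_zero]
          exact div_self (Xv_ne _ _)
        have h2 : ∏ q ∈ (Tset mu.l (n + 1)).filter (fun q => ¬q.2 = j),
            (Ψ (X ((Phi j σ) q.1)) + Ψ (X ((Phi j σ) q.2))) /
              (Ψ (X ((Phi j σ) q.1)) - Ψ (X ((Phi j σ) q.2))) =
            ∏ q ∈ Tset mu.l n, (Xv (σ q.1) + Xv (σ q.2)) / (Xv (σ q.1) - Xv (σ q.2)) := by
          refine (Finset.prod_bij (fun q _ => (j.succAbove q.1, j.succAbove q.2))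
            ?_ ?_ ?_ ?_).symm
          · intro q hq
            simp only [Tset, Finset.mem_filter, Finset.mem_univ, true_and] at hq
            obtain ⟨hq1, hqlt⟩ := hq
            rw [Finset.mem_filter]
            constructor
            · simp only [Tset, Finset.mem_filter, Finset.mem_univ, true_and]
              constructor
              · have e1 : j.succAbove q.1 = Fin.castSucc q.1 :=
                  Fin.succAbove_of_castSucc_lt _ _
                    (by rw [Fin.lt_def]; exact lt_of_lt_of_le hq1 hj')
                rw [e1, Fin.coe_castSucc]
                exact hq1
              · exact Fin.succAbove_lt_succAbove_iff.mpr hqlt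
            · exact Fin.succAbove_ne j q.2
          · intro q1 h1' q2 h2' he
            rw [Prod.mk.injEq] at he
            exact Prod.ext (Fin.succAbove_right_injective he.1)
              (Fin.succAbove_right_injective he.2)
          · intro q hq
            rw [Finset.mem_filter] at hq
            obtain ⟨hqT, hq2⟩ := hq
            simp only [Tset, Finset.mem_filter, Finset.mem_univ, true_and] at hqT
            obtain ⟨hq1, hqlt⟩ := hqT
            obtain ⟨t2, ht2⟩ := Fin.exists_succAbove_eq hq2
            have hq1n : (q.1 : ℕ) < n :=
              lt_of_lt_of_le (lt_of_lt_of_le hq1 hj') (Nat.lt_succ_iff.mp j.2)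
            have ht1 : j.succAbove ⟨(q.1 : ℕ), hq1n⟩ = q.1 := by
              rw [Fin.succAbove_of_castSucc_lt]
              · exact Fin.ext rfl
              · rw [Fin.lt_def]; exact lt_of_lt_of_le hq1 hj'
            refine ⟨(⟨(q.1 : ℕ), hq1n⟩, t2), ?_, ?_⟩
            · simp only [Tset, Finset.mem_filter, Finset.mem_univ, true_and]
              refine ⟨hq1, ?_⟩
              rw [← Fin.succAbove_lt_succAbove_iff (p := j), ht1, ht2]
              exact hqlt
            · show (j.succAbove ⟨(q.1 : ℕ), hq1n⟩, j.succAbove t2) = q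
              rw [ht1, ht2]
          · intro q hq
            rw [Phi_succAbove, Phi_succAbove, hcast, hcast]
        rw [h1, h2, one_mul]
  rw [Finset.sum_congr rfl (fun j _ => key j)]
  rw [Finset.sum_ite, Finset.sum_const_zero, Finset.sum_const, zero_add]
  congr 1
  have h1 : (Finset.univ.filter fun j : Fin (n + 1) => ((j : ℕ) < mu.l)).card = mu.l := by
    have he : (Finset.univ.filter fun j : Fin (n + 1) => ((j : ℕ) < mu.l)) =
        Finset.Iio (⟨mu.l, by omega⟩ : Fin (n + 1)) := by
      ext q
      simp [Finset.mem_Iio, Fin.lt_def]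
    rw [he, Fin.card_Iio]
  have h2 := Finset.card_filter_add_card_filter_not
    (s := (Finset.univ : Finset (Fin (n + 1)))) (p := fun j : Fin (n + 1) => (j : ℕ) < mu.l)
  rw [h1, Finset.card_univ, Fintype.card_fin] at h2
  omega

lemma stability {n : ℕ} (mu : SPartition) (a : ℕ → ℂ) (ha : a 1 = 0)
    (hm : mu.l ≤ n + 1) (p : Rn (n + 1))
    (hp : algebraMap (Rn (n + 1)) (K (n + 1)) p = Pmulti mu a (n + 1)) :
    algebraMap (Rn n) (K n) (phi n p) = Pmulti mu a n := by
  set Ψ : Rn (n + 1) →+* K n := (algebraMap (Rn n) (K n)).comp (phi n) with hΨdef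
  have hΨX_last : Ψ (X (Fin.last n)) = 0 := by
    rw [hΨdef, RingHom.comp_apply, phi_X_last, map_zero]
  have hΨX_cast : ∀ j : Fin n, Ψ (X (Fin.castSucc j)) = Xv j := by
    intro j; rw [hΨdef, RingHom.comp_apply, phi_X_cast]; rfl
  have hΨC : ∀ z : ℂ, Ψ (C z) = Cv z := by
    intro z; rw [hΨdef, RingHom.comp_apply, phi_C]; rfl
  have hx : ∀ i j : Fin (n + 1), i ≠ j → Ψ (X i) ≠ Ψ (X j) := by
    intro i j hij
    induction i using Fin.lastCases with
    | last =>
      induction j using Fin.lastCases with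
      | last => exact absurd rfl hij
      | cast j' =>
        rw [hΨX_last, hΨX_cast]
        exact fun h => Xv_ne n j' h.symm
    | cast i' =>
      induction j using Fin.lastCases with
      | last =>
        rw [hΨX_last, hΨX_cast]
        exact Xv_ne n i'
      | cast j' =>
        rw [hΨX_cast, hΨX_cast]
        intro h
        exact hij (congrArg Fin.castSucc (X_injective (emb_inj n h)))
  have ht := transport Ψ hx mu a hm p hp
  by_cases hmn : mu.l ≤ n
  · rw [sum_eval mu a ha hm hmn Ψ hΨX_last hΨX_cast hΨC, hΨC] at ht
    rw [Pmulti, dif_pos hmn]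
    have hPsip : Ψ p = algebraMap (Rn n) (K n) (phi n p) := rfl
    rw [← hPsip, ht]
    have hm1 : n + 1 - mu.l = (n - mu.l) + 1 := by omega
    rw [hm1, nsmul_eq_mul, ← mul_assoc]
    congr 1
    have hc2 : (((n - mu.l) + 1 : ℕ) : K n) = Cv (((n - mu.l) + 1 : ℕ) : ℂ) :=
      (Cv_natCast _).symm
    rw [hc2, Cv_mul]
    congr 1
    rw [Nat.factorial_succ]
    have hne1 : (((n - mu.l) + 1 : ℕ) : ℂ) ≠ 0 := by
      exact_mod_cast Nat.succ_ne_zero (n - mu.l)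
    have hne2 : (((n - mu.l).factorial : ℕ) : ℂ) ≠ 0 := by
      exact_mod_cast Nat.factorial_ne_zero (n - mu.l)
    push_cast
    field_simp
    have hX : ((n : ℂ) - (mu.l : ℂ) + 1) * (((n - mu.l).factorial : ℕ) : ℂ) ≠ 0 := by
      apply mul_ne_zero
      · rw [show ((n : ℂ) - (mu.l : ℂ)) = (((n - mu.l : ℕ)) : ℂ) from (Nat.cast_sub hmn).symm]
        exact_mod_cast Nat.succ_ne_zero (n - mu.l)
      · exact hne2
    exact div_self (by exact_mod_cast hne1)
  · have hml : n + 1 ≤ mu.l := by omega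
    rw [sum_eval_zero mu a ha hm hml Ψ hΨX_last hΨC, mul_zero] at ht
    rw [Pmulti, dif_neg hmn]
    exact ht

lemma main_aux (a : ℕ → ℂ) (ha : a 1 = 0)
    (hinj : ∀ i j : ℕ, 0 < i → 0 < j → a i = a j → i = j)
    (mu lam : SPartition) (hns : ∃ i, lam.parts i < mu.parts i) :
    ∀ n : ℕ, lam.l ≤ n → ∀ p : Rn n,
      algebraMap (Rn n) (K n) p = Pmulti mu a n →
      MvPolynomial.eval (xpt lam a n) p = 0 := by
  intro n
  induction n with
  | zero =>
    intro _ p hp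
    exact base_case a hinj mu lam hns 0 (Nat.zero_le _) p hp
  | succ n ih =>
    intro hl p hp
    by_cases hln : lam.l ≤ n
    · by_cases hm : mu.l ≤ n + 1
      · have hst := stability mu a ha hm p hp
        have hev := ih hln (phi n p) hst
        have hcomp := eval_phi (xpt lam a n) p
        rw [xpt_ext lam a hln] at hcomp
        rw [← hcomp]
        exact hev
      · have h0 : Pmulti mu a (n + 1) = 0 := by rw [Pmulti, dif_neg hm]
        have hp0 : p = 0 := emb_inj (n + 1) (by rw [hp, h0, map_zero])
        rw [hp0, map_zero]
    · exact base_case a hinj mu lam hns (n + 1) (by omega) p hp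

end SchurVanish

/-- Vanishing property (part a): if the `a_j` (`j ≥ 1`) are pairwise distinct,
`a_1 = 0`, and the shifted diagram of `μ` is not contained in that of `λ`, then
`P_{μ;a}(x(λ)) = 0`.  (Evaluation is performed on a polynomial representative of the
rational function `P_{μ;a|n}`.) -/
theorem Pmulti_vanishing
    (a : ℕ → ℂ) (ha : a 1 = 0)
    (hinj : ∀ i j : ℕ, 0 < i → 0 < j → a i = a j → i = j)
    (mu lam : SPartition) (hns : ¬ ∀ i, mu.parts i ≤ lam.parts i)
    (n : ℕ) (hm : mu.l ≤ n) (hl : lam.l ≤ n)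
    (p : MvPolynomial (Fin n) ℂ)
    (hp : algebraMap (MvPolynomial (Fin n) ℂ) (K n) p = Pmulti mu a n) :
    MvPolynomial.eval (xpt lam a n) p = 0 := by
  push_neg at hns
  exact SchurVanish.main_aux a ha hinj mu lam hns n hl p hp

end
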